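/- Let G₁ and G₂ be finitely generated groups, each admitting a surjective homomorphism onto ℤ (i.e., indicable). Then G₁ × G₂ is algebraically fibred: there is a surjection G₁ × G₂ → ℤ with finitely generated kernel. -/

import Mathlib

/-- A group is algebraically fibred if there is a surjection onto ℤ with
finitely generated kernel. -/
def AlgFibered (G : Type*) [Group G] : Prop :=
  ∃ ψ : G →* Multiplicative ℤ, Function.Surjective ψ ∧ (MonoidHom.ker ψ).FG

theorem algFibered_prod_of_indicable (G₁ G₂ : Type*) [Group G₁] [Group G₂]
    [Group.FG G₁] [Group.FG G₂]
    (f₁ : G₁ →* Multiplicative ℤ) (hf₁ : Function.Surjective f₁)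
    (f₂ : G₂ →* Multiplicative ℤ) (hf₂ : Function.Surjective f₂) :
    AlgFibered (G₁ × G₂) := by
  classical
  obtain ⟨x, hx⟩ := hf₁ (Multiplicative.ofAdd 1)
  obtain ⟨y, hy⟩ := hf₂ (Multiplicative.ofAdd 1)
  obtain ⟨T₁, hT₁, hT₁fin⟩ := Group.fg_iff.mp ‹Group.FG G₁›
  obtain ⟨T₂, hT₂, hT₂fin⟩ := Group.fg_iff.mp ‹Group.FG G₂›
  set ψ : G₁ × G₂ →* Multiplicative ℤ :=
    (f₁.comp (MonoidHom.fst G₁ G₂)) * (f₂.comp (MonoidHom.snd G₁ G₂)) with hψ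
  have hψapp : ∀ a b, ψ (a, b) = f₁ a * f₂ b := fun a b => rfl
  -- key computation: f₁ (x ^ n) = ofAdd n
  have hxz : ∀ n : ℤ, f₁ (x ^ n) = Multiplicative.ofAdd n := by
    intro n
    rw [map_zpow, hx]
    apply Multiplicative.toAdd.injective
    simp
  have hyz : ∀ n : ℤ, f₂ (y ^ n) = Multiplicative.ofAdd n := by
    intro n
    rw [map_zpow, hy]
    apply Multiplicative.toAdd.injective
    simp
  set φ₁ : G₁ → G₁ := fun a => a * x ^ (-(Multiplicative.toAdd (f₁ a))) with hφ₁
  set φ₂ : G₂ → G₂ := fun b => b * y ^ (-(Multiplicative.toAdd (f₂ b))) with hφ₂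
  set t : G₁ × G₂ := (x, y⁻¹) with htdef
  set S : Set (G₁ × G₂) :=
    insert t ((fun g => (φ₁ g, (1 : G₂))) '' T₁ ∪ (fun g => ((1 : G₁), φ₂ g)) '' T₂) with hS
  set H : Subgroup (G₁ × G₂) := Subgroup.closure S with hH
  have ht : t ∈ H := Subgroup.subset_closure (Set.mem_insert _ _)
  have htn : ∀ n : ℤ, t ^ n = (x ^ n, y ^ (-n)) := by
    intro n
    ext <;> simp [htdef, zpow_neg, inv_zpow]
  -- conjugation stability in each coordinate
  have key₁ : ∀ (n : ℤ) (a : G₁), (a, (1 : G₂)) ∈ H →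
      (x ^ n * a * x ^ (-n), (1 : G₂)) ∈ H := by
    intro n a ha
    have heq : (x ^ n * a * x ^ (-n), (1 : G₂)) = t ^ n * (a, 1) * (t ^ n)⁻¹ := by
      rw [htn n]
      ext <;> simp [zpow_neg]
    rw [heq]
    exact H.mul_mem (H.mul_mem (H.zpow_mem ht n) ha) (H.inv_mem (H.zpow_mem ht n))
  have key₂ : ∀ (n : ℤ) (b : G₂), ((1 : G₁), b) ∈ H →
      ((1 : G₁), y ^ n * b * y ^ (-n)) ∈ H := by
    intro n b hb
    have heq : ((1 : G₁), y ^ n * b * y ^ (-n)) = t ^ (-n) * (1, b) * (t ^ (-n))⁻¹ := by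
      rw [htn (-n)]
      ext <;> simp [zpow_neg]
    rw [heq]
    exact H.mul_mem (H.mul_mem (H.zpow_mem ht _) hb) (H.inv_mem (H.zpow_mem ht _))
  -- main lemmas: φᵢ lands in H
  have main₁ : ∀ a : G₁, (φ₁ a, (1 : G₂)) ∈ H := by
    intro a
    have ha : a ∈ Subgroup.closure T₁ := by rw [hT₁]; trivial
    induction ha using Subgroup.closure_induction with
    | mem g hg =>
        exact Subgroup.subset_closure (Set.mem_insert_iff.mpr (Or.inr (Or.inl ⟨g, hg, rfl⟩)))
    | one => rw [show φ₁ 1 = 1 by simp [hφ₁]]; exact H.one_mem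
    | mul a b _ _ iha ihb =>
        have h2 := key₁ (Multiplicative.toAdd (f₁ a)) _ ihb
        have heq : (φ₁ (a * b), (1 : G₂)) =
            (φ₁ a, (1 : G₂)) *
              (x ^ (Multiplicative.toAdd (f₁ a)) * φ₁ b *
                x ^ (-(Multiplicative.toAdd (f₁ a))), (1 : G₂)) := by
          ext
          · simp only [Prod.fst_mul, hφ₁, map_mul, toAdd_mul]
            group
          · simp
        rw [heq]
        exact H.mul_mem iha h2
    | inv a _ iha =>
        have hinv : ((φ₁ a)⁻¹, (1 : G₂)) ∈ H := by
          simpa using H.inv_mem iha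
        have h2 := key₁ (-(Multiplicative.toAdd (f₁ a))) _ hinv
        have heq : (φ₁ a⁻¹, (1 : G₂)) =
            (x ^ (-(Multiplicative.toAdd (f₁ a))) * (φ₁ a)⁻¹ *
              x ^ (-(-(Multiplicative.toAdd (f₁ a)))), (1 : G₂)) := by
          ext
          · simp only [hφ₁, map_inv, toAdd_inv, neg_neg]
            group
          · simp
        rw [heq]
        exact h2
  have main₂ : ∀ b : G₂, ((1 : G₁), φ₂ b) ∈ H := by
    intro b
    have hb : b ∈ Subgroup.closure T₂ := by rw [hT₂]; trivial
    induction hb using Subgroup.closure_induction with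
    | mem g hg =>
        exact Subgroup.subset_closure (Set.mem_insert_iff.mpr (Or.inr (Or.inr ⟨g, hg, rfl⟩)))
    | one => rw [show φ₂ 1 = 1 by simp [hφ₂]]; exact H.one_mem
    | mul a b _ _ iha ihb =>
        have h2 := key₂ (Multiplicative.toAdd (f₂ a)) _ ihb
        have heq : ((1 : G₁), φ₂ (a * b)) =
            ((1 : G₁), φ₂ a) *
              ((1 : G₁), y ^ (Multiplicative.toAdd (f₂ a)) * φ₂ b *
                y ^ (-(Multiplicative.toAdd (f₂ a)))) := by
          ext
          · simp
          · simp only [Prod.snd_mul, hφ₂, map_mul, toAdd_mul]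
            group
        rw [heq]
        exact H.mul_mem iha h2
    | inv a _ iha =>
        have hinv : ((1 : G₁), (φ₂ a)⁻¹) ∈ H := by
          simpa using H.inv_mem iha
        have h2 := key₂ (-(Multiplicative.toAdd (f₂ a))) _ hinv
        have heq : ((1 : G₁), φ₂ a⁻¹) =
            ((1 : G₁), y ^ (-(Multiplicative.toAdd (f₂ a))) * (φ₂ a)⁻¹ *
              y ^ (-(-(Multiplicative.toAdd (f₂ a))))) := by
          ext
          · simp
          · simp only [hφ₂, map_inv, toAdd_inv, neg_neg]
            group
        rw [heq]
        exact h2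
  refine ⟨ψ, ?_, ?_⟩
  · -- surjectivity
    intro z
    obtain ⟨a, ha⟩ := hf₁ z
    exact ⟨(a, 1), by simp [hψapp, ha]⟩
  · -- kernel is H, which is finitely generated
    have hker : MonoidHom.ker ψ = H := by
      apply le_antisymm
      · -- ker ψ ≤ H
        rintro ⟨a, b⟩ hab
        have hab' : Multiplicative.toAdd (f₁ a) + Multiplicative.toAdd (f₂ b) = 0 := by
          have : f₁ a * f₂ b = 1 := hab
          simpa [← toAdd_mul] using congrArg Multiplicative.toAdd this
        set n : ℤ := Multiplicative.toAdd (f₁ a) with hn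
        have hbn : Multiplicative.toAdd (f₂ b) = -n := by omega
        have h1 : (a * x ^ (-n), (1 : G₂)) ∈ H := main₁ a
        have h2 : ((1 : G₁), b * y ^ n) ∈ H := by
          simpa [hφ₂, hbn] using main₂ b
        have h3 : ((1 : G₁), y ^ n * (b * y ^ n) * y ^ (-n)) ∈ H := key₂ n _ h2
        have heq : ((a, b) : G₁ × G₂) =
            (a * x ^ (-n), (1 : G₂)) * t ^ n * ((1 : G₁), y ^ n * (b * y ^ n) * y ^ (-n)) := by
          rw [htn n]
          ext
          · simp [zpow_neg]
          · simp [zpow_neg]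
            group
        rw [heq]
        exact H.mul_mem (H.mul_mem h1 (H.zpow_mem ht n)) h3
      · -- H ≤ ker ψ
        rw [hH]
        apply (Subgroup.closure_le _).mpr
        rintro ⟨a, b⟩ hab
        rcases hab with h | ⟨g, hg, h⟩ | ⟨g, hg, h⟩
        · simp only [SetLike.mem_coe, MonoidHom.mem_ker]
          have : ((a, b) : G₁ × G₂) = t := h
          rw [this, htdef, hψapp, hx, map_inv, hy]
          simp
        · simp only [SetLike.mem_coe, MonoidHom.mem_ker]
          have h1 : a = φ₁ g := (Prod.ext_iff.mp h.symm).1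
          have h2 : b = (1 : G₂) := (Prod.ext_iff.mp h.symm).2
          rw [h1, h2, hψapp, hφ₁, map_one, mul_one, map_mul, hxz]
          apply Multiplicative.toAdd.injective
          simp
        · simp only [SetLike.mem_coe, MonoidHom.mem_ker]
          have h1 : a = (1 : G₁) := (Prod.ext_iff.mp h.symm).1
          have h2 : b = φ₂ g := (Prod.ext_iff.mp h.symm).2
          rw [h1, h2, hψapp, hφ₂, map_one, one_mul, map_mul, hyz]
          apply Multiplicative.toAdd.injective
          simp
    rw [hker, hH]
    exact Subgroup.fg_iff _ |>.mpr
      ⟨S, rfl, Set.Finite.insert _ ((hT₁fin.image _).union (hT₂fin.image _))⟩
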